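/- Let ⟨H,T⟩ be an HT-trace of length λ with associated three-valued valuation m, and let φ, ψ be temporal formulas. Then for every k with 0 ≤ k < λ: m[k, φTψ] = min( m[k,ψ], max( m[k,φ], p ) ), where p = 2 if k = 0 and p = m[k−1, φTψ] if k > 0. In particular m[0, φTψ] = m[0,ψ]. -/

import Mathlib

/-- Syntax of temporal formulas over an alphabet of atoms `α`:
`⊥`, atoms, `∧`, `∨`, `→`, previous `●`, since `S`, trigger `T`,
next `○`, until `U`, release `R`. -/
inductive TForm (α : Type) : Type
  | bot   : TForm α
  | atom  : α → TForm α
  | conj  : TForm α → TForm α → TForm α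
  | disj  : TForm α → TForm α → TForm α
  | impl  : TForm α → TForm α → TForm α
  | prev  : TForm α → TForm α
  | since : TForm α → TForm α → TForm α
  | trig  : TForm α → TForm α → TForm α
  | next  : TForm α → TForm α
  | untl  : TForm α → TForm α → TForm α
  | rels  : TForm α → TForm α → TForm α

/-- THT_f satisfaction `⟨H,T⟩,k ⊨ φ` for finite traces of length `n`
(time points are `0 ≤ k < n`). -/
def sat {α : Type} (n : ℕ) : (ℕ → Set α) → (ℕ → Set α) → ℕ → TForm α → Prop
  | _, _, _, .bot => False
  | H, _, k, .atom a => a ∈ H k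
  | H, T, k, .conj φ ψ => sat n H T k φ ∧ sat n H T k ψ
  | H, T, k, .disj φ ψ => sat n H T k φ ∨ sat n H T k ψ
  | H, T, k, .impl φ ψ =>
      (sat n H T k φ → sat n H T k ψ) ∧ (sat n T T k φ → sat n T T k ψ)
  | H, T, k, .prev φ => 0 < k ∧ sat n H T (k - 1) φ
  | H, T, k, .since φ ψ =>
      ∃ j, j ≤ k ∧ sat n H T j ψ ∧ ∀ i, j < i → i ≤ k → sat n H T i φ
  | H, T, k, .trig φ ψ =>
      ∀ j, j ≤ k → sat n H T j ψ ∨ ∃ i, j < i ∧ i ≤ k ∧ sat n H T i φ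
  | H, T, k, .next φ => k + 1 < n ∧ sat n H T (k + 1) φ
  | H, T, k, .untl φ ψ =>
      ∃ j, k ≤ j ∧ j < n ∧ sat n H T j ψ ∧ ∀ i, k ≤ i → i < j → sat n H T i φ
  | H, T, k, .rels φ ψ =>
      ∀ j, k ≤ j → j < n → sat n H T j ψ ∨ ∃ i, k ≤ i ∧ i < j ∧ sat n H T i φ

open Classical in
/-- The three-valued valuation `m[k,φ] ∈ {0,1,2}` associated with an HT-trace
`⟨H,T⟩` of length `n` (an empty `Finset.inf` is `⊤ = 2`, an empty `Finset.sup` is `⊥ = 0`). -/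
noncomputable def val {α : Type} (H T : ℕ → Set α) (n : ℕ) : ℕ → TForm α → Fin 3
  | _, .bot => 0
  | k, .atom a => if a ∈ H k then 2 else if a ∈ T k then 1 else 0
  | k, .conj φ ψ => min (val H T n k φ) (val H T n k ψ)
  | k, .disj φ ψ => max (val H T n k φ) (val H T n k ψ)
  | k, .impl φ ψ => if val H T n k φ ≤ val H T n k ψ then 2 else val H T n k ψ
  | k, .prev φ => if k = 0 then 0 else val H T n (k - 1) φ
  | k, .since φ ψ =>
      (Finset.range (k + 1)).sup fun j =>
        min (val H T n j ψ) ((Finset.Ioc j k).inf fun i => val H T n i φ)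
  | k, .trig φ ψ =>
      (Finset.range (k + 1)).inf fun j =>
        max (val H T n j ψ) ((Finset.Ioc j k).sup fun i => val H T n i φ)
  | k, .next φ => if k + 1 = n then 0 else val H T n (k + 1) φ
  | k, .untl φ ψ =>
      (Finset.Ico k n).sup fun j =>
        min (val H T n j ψ) ((Finset.Ico k j).inf fun i => val H T n i φ)
  | k, .rels φ ψ =>
      (Finset.Ico k n).inf fun j =>
        max (val H T n j ψ) ((Finset.Ico k j).sup fun i => val H T n i φ)

/-- one-step unfolding of `trigger` for the three-valued valuation:
`m[k, φTψ] = min(m[k,ψ], max(m[k,φ], p))` where `p = 2` if `k = 0` and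
`p = m[k-1, φTψ]` if `k > 0`; in particular `m[0, φTψ] = m[0,ψ]`. -/

private lemma val_trig_zero {α : Type} (H T : ℕ → Set α) (n : ℕ) (φ ψ : TForm α) :
    val H T n 0 (.trig φ ψ) = val H T n 0 ψ := by
  show (Finset.range 1).inf _ = _
  simp [Finset.Ioc_self]

private lemma val_trig_succ {α : Type} (H T : ℕ → Set α) (n : ℕ) (φ ψ : TForm α) (k : ℕ) :
    val H T n (k+1) (.trig φ ψ) =
      min (val H T n (k+1) ψ) (max (val H T n (k+1) φ) (val H T n k (.trig φ ψ))) := by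
  show (Finset.range (k+2)).inf
      (fun j => max (val H T n j ψ) ((Finset.Ioc j (k+1)).sup fun i => val H T n i φ)) = _
  rw [Finset.range_add_one, Finset.inf_insert]
  have h1 : ((Finset.Ioc (k+1) (k+1)).sup fun i => val H T n i φ) = ⊥ := by
    simp [Finset.Ioc_self]
  have h2 : ∀ j ∈ Finset.range (k+1),
      max (val H T n j ψ) ((Finset.Ioc j (k+1)).sup fun i => val H T n i φ)
      = val H T n (k+1) φ ⊔
        (max (val H T n j ψ) ((Finset.Ioc j k).sup fun i => val H T n i φ)) := by
    intro j hj
    rw [Finset.mem_range] at hj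
    have : Finset.Ioc j (k+1) = insert (k+1) (Finset.Ioc j k) := by
      ext x; simp only [Finset.mem_Ioc, Finset.mem_insert]; omega
    rw [this, Finset.sup_insert]
    rw [max_comm (val H T n j ψ), max_assoc]
    congr 1
    exact max_comm _ _
  rw [Finset.inf_congr rfl h2, ← Finset.inf_sup_distrib_left]
  show _ ⊓ _ = _
  rw [h1, sup_bot_eq]
  have hY : val H T n k (.trig φ ψ) =
      (Finset.range (k+1)).inf fun a =>
        val H T n a ψ ⊔ (Finset.Ioc a k).sup fun i => val H T n i φ := rfl
  rw [hY]

theorem val_trigger_unfold {α : Type} (H T : ℕ → Set α) (n : ℕ)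
    (hlen : 0 < n) (hHT : ∀ i, i < n → H i ⊆ T i)
    (φ ψ : TForm α) :
    (∀ k, k < n →
      val H T n k (.trig φ ψ) =
        min (val H T n k ψ)
          (max (val H T n k φ)
            (if k = 0 then 2 else val H T n (k - 1) (.trig φ ψ)))) ∧
    val H T n 0 (.trig φ ψ) = val H T n 0 ψ := by
  constructor
  · intro k hk
    cases k with
    | zero =>
        rw [val_trig_zero, if_pos rfl]
        have h2 : max (val H T n 0 φ) (2 : Fin 3) = 2 := by
          apply max_eq_right; simp [Fin.le_def]; omega
        rw [h2]
        have := (val H T n 0 ψ).isLt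
        rw [min_eq_left]
        simp [Fin.le_def]; omega
    | succ m =>
      simp only [Nat.succ_ne_zero, if_false, Nat.add_sub_cancel]
      exact val_trig_succ H T n φ ψ m
  · exact val_trig_zero H T n φ ψ
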